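/- Let u¹, u² : ℝ² → M_n(ℝ) be continuous, let Ψ : ℝ² → M_n(ℝ) be continuously differentiable with Ψ(ξ) invertible for every ξ and solving the linear spectral problem for (u¹, u²), and let S : ℝ² → M_n(ℝ) be continuously differentiable. Then the gauge surface F^S := Ψ⁻¹·S·Ψ is differentiable with partial derivatives ∂₁F^S = Ψ⁻¹·(∂₁S + [S, u¹])·Ψ and ∂₂F^S = Ψ⁻¹·(∂₂S + [S, u²])·Ψ at every point of ℝ². -/

import Mathlib

open Matrix

attribute [local instance] Matrix.normedAddCommGroup Matrix.normedSpace

/-- Partial derivative in the first variable `ξ₁` of a matrix-valued map on `ℝ²`. -/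
noncomputable def pd1 {n : ℕ} (f : ℝ × ℝ → Matrix (Fin n) (Fin n) ℝ) (p : ℝ × ℝ) :
    Matrix (Fin n) (Fin n) ℝ :=
  fderiv ℝ f p (1, 0)

/-- Partial derivative in the second variable `ξ₂` of a matrix-valued map on `ℝ²`. -/
noncomputable def pd2 {n : ℕ} (f : ℝ × ℝ → Matrix (Fin n) (Fin n) ℝ) (p : ℝ × ℝ) :
    Matrix (Fin n) (Fin n) ℝ :=
  fderiv ℝ f p (0, 1)

section Aux

variable {n : ℕ} {E : Type*} [NormedAddCommGroup E] [NormedSpace ℝ E]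

local notation "Mn" => Matrix (Fin n) (Fin n) ℝ

noncomputable def mulCLM (n : ℕ) :
    Matrix (Fin n) (Fin n) ℝ →L[ℝ] Matrix (Fin n) (Fin n) ℝ →L[ℝ] Matrix (Fin n) (Fin n) ℝ := by
  exact LinearMap.toContinuousLinearMap
    { toFun := fun A => LinearMap.toContinuousLinearMap (LinearMap.mulLeft ℝ A)
      map_add' := by intro A B; ext C; simp [add_mul]
      map_smul' := by intro r A; ext C; simp [smul_mul_assoc] }

@[simp] lemma mulCLM_apply (A B : Mn) : mulCLM n A B = A * B := rfl

lemma hasFDerivAt_mul' {f g : E → Mn} {f' g' : E →L[ℝ] Mn} {p : E}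
    (hf : HasFDerivAt f f' p) (hg : HasFDerivAt g g' p) :
    HasFDerivAt (fun q => f q * g q)
      (((mulCLM n) (f p)).comp g' + (id (((mulCLM n).comp f').flip (g p)) : E →L[ℝ] Mn)) p := by
  exact HasFDerivAt.clm_apply (c := fun q => mulCLM n (f q)) ((mulCLM n).hasFDerivAt.comp p hf) hg

lemma differentiableAt_mul' {f g : E → Mn} {p : E}
    (hf : DifferentiableAt ℝ f p) (hg : DifferentiableAt ℝ g p) :
    DifferentiableAt ℝ (fun q => f q * g q) p :=
  (hasFDerivAt_mul' hf.hasFDerivAt hg.hasFDerivAt).differentiableAt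

lemma fderiv_mul_apply' {f g : E → Mn} {p : E}
    (hf : DifferentiableAt ℝ f p) (hg : DifferentiableAt ℝ g p) (v : E) :
    fderiv ℝ (fun q => f q * g q) p v = f p * fderiv ℝ g p v + fderiv ℝ f p v * g p := by
  rw [(hasFDerivAt_mul' hf.hasFDerivAt hg.hasFDerivAt).fderiv]
  rfl

lemma differentiable_of_entries {f : E → Mn}
    (h : ∀ i j, Differentiable ℝ fun x => f x i j) : Differentiable ℝ f := by
  exact differentiable_pi.mpr fun i => differentiable_pi.mpr fun j => h i j

lemma differentiable_entry (i j : Fin n) : Differentiable ℝ (fun A : Mn => A i j) :=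
  (LinearMap.toContinuousLinearMap (Matrix.entryLinearMap ℝ ℝ i j)).differentiable

lemma differentiable_prod {ι : Type} [DecidableEq ι] (u : Finset ι) (f : ι → Mn → ℝ)
    (h : ∀ i, Differentiable ℝ (f i)) : Differentiable ℝ (fun A => ∏ i ∈ u, f i A) :=
  fun x => (HasFDerivAt.finset_prod (fun i _ => (h i x).hasFDerivAt)).differentiableAt

lemma differentiable_det : Differentiable ℝ (fun A : Mn => A.det) := by
  simp only [Matrix.det_apply']
  refine Differentiable.fun_sum fun σ _ => ?_
  exact (differentiable_prod Finset.univ (fun i A => A (σ i) i)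
    (fun i => differentiable_entry (σ i) i)).const_mul _

lemma differentiable_updateRow (j : Fin n) (c : Fin n → ℝ) :
    Differentiable ℝ (fun A : Mn => A.updateRow j c) := by
  apply differentiable_of_entries
  intro k l
  simp only [Matrix.updateRow_apply]
  by_cases hk : k = j
  · simp [hk]
  · simp only [hk, if_false]
    exact differentiable_entry k l

lemma differentiable_adjugate : Differentiable ℝ (fun A : Mn => A.adjugate) := by
  apply differentiable_of_entries
  intro i j
  simp only [Matrix.adjugate_apply]
  exact differentiable_det.comp (differentiable_updateRow j _)

lemma differentiable_inv {Ψ : E → Mn} (hΨ : Differentiable ℝ Ψ)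
    (hinv : ∀ p, IsUnit (Ψ p)) : Differentiable ℝ (fun p => (Ψ p)⁻¹) := by
  have hdet : ∀ p, (Ψ p).det ≠ 0 := fun p =>
    ((Matrix.isUnit_iff_isUnit_det _).mp (hinv p)).ne_zero
  have heq : (fun p => (Ψ p)⁻¹) = fun p => ((Ψ p).det)⁻¹ • (Ψ p).adjugate := by
    funext p
    rw [Matrix.inv_def, Ring.inverse_eq_inv']
  rw [heq]
  exact ((differentiable_det.comp hΨ).inv hdet).smul (differentiable_adjugate.comp hΨ)

end Aux

/-- the gauge surface `F^S := Ψ⁻¹·S·Ψ` is differentiable, with partial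
derivatives `∂₁F^S = Ψ⁻¹·(∂₁S + [S, u¹])·Ψ` and `∂₂F^S = Ψ⁻¹·(∂₂S + [S, u²])·Ψ`. -/
theorem gauge_surface_tangent_vectors {n : ℕ} (hn : 1 ≤ n)
    (u1 u2 Ψ S : ℝ × ℝ → Matrix (Fin n) (Fin n) ℝ)
    (hu1 : Continuous u1) (hu2 : Continuous u2)
    (hΨ : ContDiff ℝ 1 Ψ)
    (hΨinv : ∀ p : ℝ × ℝ, IsUnit (Ψ p))
    (hlsp1 : ∀ p : ℝ × ℝ, pd1 Ψ p = u1 p * Ψ p)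
    (hlsp2 : ∀ p : ℝ × ℝ, pd2 Ψ p = u2 p * Ψ p)
    (hS : ContDiff ℝ 1 S)
    (FS : ℝ × ℝ → Matrix (Fin n) (Fin n) ℝ)
    (hFS : FS = fun p => (Ψ p)⁻¹ * S p * Ψ p) :
    (∀ p : ℝ × ℝ, DifferentiableAt ℝ FS p) ∧
    (∀ p : ℝ × ℝ,
      pd1 FS p = (Ψ p)⁻¹ * (pd1 S p + (S p * u1 p - u1 p * S p)) * Ψ p) ∧
    (∀ p : ℝ × ℝ,
      pd2 FS p = (Ψ p)⁻¹ * (pd2 S p + (S p * u2 p - u2 p * S p)) * Ψ p) := by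
  subst hFS
  have hΨd : Differentiable ℝ Ψ := hΨ.differentiable one_ne_zero
  have hSd : Differentiable ℝ S := hS.differentiable one_ne_zero
  set g : ℝ × ℝ → Matrix (Fin n) (Fin n) ℝ := fun p => (Ψ p)⁻¹ with hgdef
  have hgd : Differentiable ℝ g := differentiable_inv hΨd hΨinv
  have hmg : ∀ p, Ψ p * g p = 1 := fun p =>
    Matrix.mul_nonsing_inv _ ((Matrix.isUnit_iff_isUnit_det _).mp (hΨinv p))
  have hgm : ∀ p, g p * Ψ p = 1 := fun p =>
    Matrix.nonsing_inv_mul _ ((Matrix.isUnit_iff_isUnit_det _).mp (hΨinv p))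
  have hg' : ∀ (p : ℝ × ℝ) (v : ℝ × ℝ),
      fderiv ℝ g p v = -(g p * (fderiv ℝ Ψ p v * g p)) := by
    intro p v
    have h0 : fderiv ℝ (fun q => g q * Ψ q) p v = 0 := by
      have hone : (fun q => g q * Ψ q) = fun _ => (1 : Matrix (Fin n) (Fin n) ℝ) :=
        funext hgm
      rw [hone, fderiv_fun_const]
      simp
    rw [fderiv_mul_apply' (hgd p) (hΨd p)] at h0
    have h2 : fderiv ℝ g p v * Ψ p = -(g p * fderiv ℝ Ψ p v) := by
      rwa [add_comm, add_eq_zero_iff_eq_neg] at h0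
    calc fderiv ℝ g p v = fderiv ℝ g p v * (Ψ p * g p) := by rw [hmg p, mul_one]
      _ = (fderiv ℝ g p v * Ψ p) * g p := by rw [mul_assoc]
      _ = -(g p * fderiv ℝ Ψ p v) * g p := by rw [h2]
      _ = -(g p * (fderiv ℝ Ψ p v * g p)) := by noncomm_ring
  have hdiff : ∀ p, DifferentiableAt ℝ (fun q => (Ψ q)⁻¹ * S q * Ψ q) p := fun p =>
    differentiableAt_mul' (differentiableAt_mul' (hgd p) (hSd p)) (hΨd p)
  have key : ∀ (v : ℝ × ℝ) (u : ℝ × ℝ → Matrix (Fin n) (Fin n) ℝ),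
      (∀ p, fderiv ℝ Ψ p v = u p * Ψ p) → ∀ p,
      fderiv ℝ (fun q => (Ψ q)⁻¹ * S q * Ψ q) p v =
        (Ψ p)⁻¹ * (fderiv ℝ S p v + (S p * u p - u p * S p)) * Ψ p := by
    intro v u hu p
    have hgu : fderiv ℝ g p v = -(g p * u p) := by
      rw [hg' p v, hu p, mul_assoc (u p), hmg p, mul_one]
    have e1 : fderiv ℝ (fun q => (Ψ q)⁻¹ * S q * Ψ q) p v =
        (g p * S p) * fderiv ℝ Ψ p v +
          fderiv ℝ (fun q => g q * S q) p v * Ψ p := by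
      exact fderiv_mul_apply' (differentiableAt_mul' (hgd p) (hSd p)) (hΨd p) v
    have e2 : fderiv ℝ (fun q => g q * S q) p v =
        g p * fderiv ℝ S p v + fderiv ℝ g p v * S p :=
      fderiv_mul_apply' (hgd p) (hSd p) v
    rw [e1, e2, hgu, hu p]
    show g p * S p * (u p * Ψ p) + (g p * fderiv ℝ S p v + -(g p * u p) * S p) * Ψ p
      = g p * (fderiv ℝ S p v + (S p * u p - u p * S p)) * Ψ p
    noncomm_ring
  refine ⟨hdiff, fun p => key (1, 0) u1 hlsp1 p, fun p => key (0, 1) u2 hlsp2 p⟩
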